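/- Let $r,q\ge 1$, $n=qr+1$, $k\ge 1$, and let $T$ be a $(kn)\times r$ array satisfying: rows strictly increasing, columns weakly increasing, every value appears exactly $rk$ times, $T(kn,j)\le jq+1$ for all $j$, and $T(1,j)\ge (j-2)q+m_{j-1}+1$ for $2\le j\le r$ with fixed $1\le m_i\le q$. Fix $1\le j\le r-1$. Then: (i) for $2\le l\le m_j$, $T(m,j)=(j-1)q+l$ for all $k(r(l-1)-j+1)+1\le m\le k(rl-j+1)$; and (ii) for $m_j+1\le l\le q+1$, $T(m,j)=(j-1)q+l$ for all $k(r(l-1)-j+1)+1\le m\le k(r(l-1)+1)$. -/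

import Mathlib

/-- Lemma 3.4 of the paper: blocks of constant entries in column `j` of a
balanced standard tableau supported on `X^{v_m}_{w_{r,n}}`. -/
theorem column_blocks
    (r q : ℕ) (hr : 0 < r) (hq : 0 < q) (n : ℕ) (hn : n = q * r + 1)
    (k : ℕ) (hk : 0 < k)
    (m : ℕ → ℕ) (hm : ∀ i : ℕ, 1 ≤ i → i ≤ r - 1 → 1 ≤ m i ∧ m i ≤ q)
    (T : ℕ → ℕ → ℕ)
    (hentries : ∀ i j : ℕ, 1 ≤ i → i ≤ k * n → 1 ≤ j → j ≤ r → 1 ≤ T i j ∧ T i j ≤ n)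
    (hrows : ∀ i j : ℕ, 1 ≤ i → i ≤ k * n → 1 ≤ j → j < r → T i j < T i (j + 1))
    (hcols : ∀ i j : ℕ, 1 ≤ i → i < k * n → 1 ≤ j → j ≤ r → T i j ≤ T (i + 1) j)
    (hcount : ∀ t : ℕ, 1 ≤ t → t ≤ n →
      (((Finset.Icc 1 (k * n)) ×ˢ (Finset.Icc 1 r)).filter
        (fun p => T p.1 p.2 = t)).card = r * k)
    (hlast : ∀ j : ℕ, 1 ≤ j → j ≤ r → T (k * n) j ≤ j * q + 1)
    (hfirst : ∀ j : ℕ, 2 ≤ j → j ≤ r → (j - 2) * q + m (j - 1) + 1 ≤ T 1 j)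
    (j : ℕ) (hj1 : 1 ≤ j) (hjr : j ≤ r - 1) :
    (∀ l : ℕ, 2 ≤ l → l ≤ m j →
      ∀ i : ℕ, k * (r * (l - 1) + 1 - j) + 1 ≤ i → i ≤ k * (r * l + 1 - j) →
        T i j = (j - 1) * q + l) ∧
    (∀ l : ℕ, m j + 1 ≤ l → l ≤ q + 1 →
      ∀ i : ℕ, k * (r * (l - 1) + 1 - j) + 1 ≤ i → i ≤ k * (r * (l - 1) + 1) →
        T i j = (j - 1) * q + l) := by
  have hjr' : j ≤ r := le_trans hjr (Nat.sub_le r 1)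
  have hn1 : 1 ≤ n := by omega
  have hM1 : 1 ≤ k * n := Nat.one_le_iff_ne_zero.mpr (by positivity)
  -- columns are weakly increasing
  have hmono : ∀ j' i i', 1 ≤ j' → j' ≤ r → 1 ≤ i → i ≤ i' → i' ≤ k * n → T i j' ≤ T i' j' := by
    intro j' i i' hj'1 hj'r hi1 hii'
    induction i', hii' using Nat.le_induction with
    | base => intro _; exact le_rfl
    | succ i'' h ih =>
      intro hM
      exact le_trans (ih (by omega)) (hcols i'' j' (by omega) (by omega) hj'1 hj'r)
  -- the global counting identity
  have key : ∀ s, s ≤ n → ∑ j' ∈ Finset.Icc 1 r,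
      ((Finset.Icc 1 (k*n)).filter (fun i => T i j' ≤ s)).card = s * (r * k) := by
    intro s hs
    have h1 : (((Finset.Icc 1 (k*n)) ×ˢ (Finset.Icc 1 r)).filter (fun p => T p.1 p.2 ≤ s)).card
        = ∑ j' ∈ Finset.Icc 1 r, ((Finset.Icc 1 (k*n)).filter (fun i => T i j' ≤ s)).card := by
      rw [Finset.card_filter, Finset.sum_product, Finset.sum_comm]
      exact Finset.sum_congr rfl (fun j' _ => (Finset.card_filter _ _).symm)
    rw [← h1]
    have h2 : ((Finset.Icc 1 (k*n)) ×ˢ (Finset.Icc 1 r)).filter (fun p => T p.1 p.2 ≤ s)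
        = (Finset.Icc 1 s).biUnion (fun t =>
            ((Finset.Icc 1 (k*n)) ×ˢ (Finset.Icc 1 r)).filter (fun p => T p.1 p.2 = t)) := by
      ext p
      simp only [Finset.mem_biUnion, Finset.mem_filter, Finset.mem_Icc, Finset.mem_product]
      constructor
      · rintro ⟨hp, hTs⟩
        exact ⟨T p.1 p.2, ⟨(hentries p.1 p.2 hp.1.1 hp.1.2 hp.2.1 hp.2.2).1, hTs⟩, hp, rfl⟩
      · rintro ⟨t, ht, hp, hT⟩
        exact ⟨hp, by omega⟩
    rw [h2, Finset.card_biUnion]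
    · rw [Finset.sum_congr rfl (fun t ht => hcount t (Finset.mem_Icc.mp ht).1
        (le_trans (Finset.mem_Icc.mp ht).2 hs)), Finset.sum_const, smul_eq_mul, Nat.card_Icc]
      simp [mul_comm]
    · intro a ha b hb hab
      simp only [Finset.disjoint_left, Finset.mem_filter]
      rintro p ⟨_, hpa⟩ ⟨_, hpb⟩
      exact hab (by omega)
  -- each value appears at most r*k times in a single column
  have hval : ∀ j' t, 1 ≤ j' → j' ≤ r → 1 ≤ t → t ≤ n →
      ((Finset.Icc 1 (k*n)).filter (fun i => T i j' = t)).card ≤ r * k := by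
    intro j' t hj'1 hj'r ht1 htn
    rw [← hcount t ht1 htn]
    apply Finset.card_le_card_of_injOn (fun i => (i, j'))
    · intro i hi
      simp only [Finset.mem_coe, Finset.mem_filter, Finset.mem_Icc, Finset.mem_product] at hi ⊢
      exact ⟨⟨hi.1, hj'1, hj'r⟩, hi.2⟩
    · intro a _ b _ hab
      simpa using congrArg Prod.fst hab
  -- entries in a value-range are few
  have hrange : ∀ a b, b ≤ n →
      ((Finset.Icc 1 (k*n)).filter (fun i => a < T i j ∧ T i j ≤ b)).card ≤ (b - a) * (r * k) := by
    intro a b hbn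
    have hsub : ((Finset.Icc 1 (k*n)).filter (fun i => a < T i j ∧ T i j ≤ b)) ⊆
        (Finset.Icc (a+1) b).biUnion (fun t => (Finset.Icc 1 (k*n)).filter (fun i => T i j = t)) := by
      intro i hi
      simp only [Finset.mem_filter, Finset.mem_Icc, Finset.mem_biUnion] at hi ⊢
      exact ⟨T i j, ⟨by omega, hi.2.2⟩, hi.1, rfl⟩
    calc ((Finset.Icc 1 (k*n)).filter (fun i => a < T i j ∧ T i j ≤ b)).card
        ≤ ((Finset.Icc (a+1) b).biUnion (fun t => (Finset.Icc 1 (k*n)).filter (fun i => T i j = t))).card :=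
          Finset.card_le_card hsub
      _ ≤ ∑ t ∈ Finset.Icc (a+1) b, ((Finset.Icc 1 (k*n)).filter (fun i => T i j = t)).card :=
          Finset.card_biUnion_le
      _ ≤ ∑ _t ∈ Finset.Icc (a+1) b, (r*k) := Finset.sum_le_sum (fun t ht => by
          rw [Finset.mem_Icc] at ht
          exact hval j t hj1 hjr' (by omega) (le_trans ht.2 hbn))
      _ ≤ (b - a) * (r*k) := by
          rw [Finset.sum_const, smul_eq_mul, Nat.card_Icc]
          exact Nat.mul_le_mul_right _ (by omega)
  -- columns to the left are eventually full
  have hfull : ∀ j' s, 1 ≤ j' → j' ≤ r → j' * q + 1 ≤ s →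
      ((Finset.Icc 1 (k*n)).filter (fun i => T i j' ≤ s)).card = k * n := by
    intro j' s hj'1 hj'r hs
    rw [Finset.filter_true_of_mem, Nat.card_Icc]
    · omega
    · intro i hi
      rw [Finset.mem_Icc] at hi
      exact le_trans (le_trans (hmono j' i (k*n) hj'1 hj'r hi.1 hi.2 le_rfl) (hlast j' hj'1 hj'r)) hs
  -- columns to the right start empty
  have hempty : ∀ j' s, 2 ≤ j' → j' ≤ r → s < (j' - 2) * q + m (j' - 1) + 1 →
      ((Finset.Icc 1 (k*n)).filter (fun i => T i j' ≤ s)).card = 0 := by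
    intro j' s hj'2 hj'r hs
    rw [Finset.card_eq_zero, Finset.filter_eq_empty_iff]
    intro i hi
    rw [Finset.mem_Icc] at hi
    have h1 : T 1 j' ≤ T i j' := hmono j' 1 i (by omega) hj'r le_rfl hi.1 hi.2
    have h2 := hfirst j' hj'2 hj'r
    omega
  -- splitting of the column sum at j
  have hsplit : ∀ f : ℕ → ℕ, ∑ j' ∈ Finset.Icc 1 r, f j'
      = (∑ j' ∈ Finset.Icc 1 (j-1), f j') + f j + ∑ j' ∈ Finset.Icc (j+1) r, f j' := by
    intro f
    have e0 : Finset.Icc 1 r = Finset.Ioc 0 r := by ext x; simp [Nat.lt_iff_add_one_le]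
    have e1 : Finset.Icc 1 (j-1) = Finset.Ioc 0 (j-1) := by ext x; simp [Nat.lt_iff_add_one_le]
    have e2 : Finset.Icc (j+1) r = Finset.Ioc j r := by ext x; simp only [Finset.mem_Icc, Finset.mem_Ioc]; omega
    have e3 : Finset.Ioc (j-1) j = {j} := by ext x; simp [Finset.mem_Ioc]; omega
    have h1 := Finset.sum_Ioc_consecutive f (show 0 ≤ j-1 by omega) (show j-1 ≤ r by omega)
    have h2 := Finset.sum_Ioc_consecutive f (show j-1 ≤ j by omega) (show j ≤ r from hjr')
    rw [e0, e1, e2, ← h1, ← h2, e3, Finset.sum_singleton, ← add_assoc]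
  -- pointwise extraction from card bounds
  have hcard_lb : ∀ s N i, ((Finset.Icc 1 (k*n)).filter (fun i => T i j ≤ s)).card ≤ N →
      N + 1 ≤ i → i ≤ k * n → s + 1 ≤ T i j := by
    intro s N i hc hNi hiM
    by_contra hcon
    push_neg at hcon
    have hsub : Finset.Icc 1 i ⊆ (Finset.Icc 1 (k*n)).filter (fun i => T i j ≤ s) := by
      intro i' hi'
      rw [Finset.mem_Icc] at hi'
      rw [Finset.mem_filter, Finset.mem_Icc]
      exact ⟨⟨hi'.1, le_trans hi'.2 hiM⟩,
        le_trans (hmono j i' i hj1 hjr' hi'.1 hi'.2 hiM) (by omega)⟩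
    have := Finset.card_le_card hsub
    rw [Nat.card_Icc] at this
    omega
  have hcard_ub : ∀ t N i, N ≤ ((Finset.Icc 1 (k*n)).filter (fun i => T i j ≤ t)).card →
      1 ≤ i → i ≤ N → T i j ≤ t := by
    intro t N i hc hi1 hiN
    by_contra hcon
    push_neg at hcon
    have hsub : (Finset.Icc 1 (k*n)).filter (fun i => T i j ≤ t) ⊆ Finset.Icc 1 (i-1) := by
      intro i' hi'
      rw [Finset.mem_filter, Finset.mem_Icc] at hi'
      rw [Finset.mem_Icc]
      refine ⟨hi'.1.1, ?_⟩
      by_contra hgt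
      push_neg at hgt
      have h1 := hmono j i i' hj1 hjr' hi1 (by omega) hi'.1.2
      omega
    have := Finset.card_le_card hsub
    rw [Nat.card_Icc] at this
    omega
  -- the count of entries ≤ (j-1)q + l - 1 in column j is small
  have hclow : ∀ l, 2 ≤ l → l ≤ q + 1 →
      ((Finset.Icc 1 (k*n)).filter (fun i => T i j ≤ (j-1)*q + l - 1)).card
        ≤ k * (r*(l-1) + 1 - j) := by
    intro l hl2 hlq
    set s := (j-1)*q + l - 1 with hsdef
    have hsub1 : (j-1)*q = j*q - q := Nat.sub_one_mul j q
    have hsub2 : j*q ≤ r*q := Nat.mul_le_mul_right q hjr'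
    have hsub3 : r*q = q*r := Nat.mul_comm r q
    have hsub4 : q ≤ j*q := Nat.le_mul_of_pos_left q hj1
    have hsn : s ≤ n := by omega
    have hkey := key s hsn
    rw [hsplit (fun j' => ((Finset.Icc 1 (k*n)).filter (fun i => T i j' ≤ s)).card)] at hkey
    have hfs : ∑ j' ∈ Finset.Icc 1 (j-1),
        ((Finset.Icc 1 (k*n)).filter (fun i => T i j' ≤ s)).card = (j-1)*(k*n) := by
      have hc : ∀ j' ∈ Finset.Icc 1 (j-1),
          ((Finset.Icc 1 (k*n)).filter (fun i => T i j' ≤ s)).card = k*n := by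
        intro j' hj'
        rw [Finset.mem_Icc] at hj'
        refine hfull j' s hj'.1 (by omega) ?_
        have h1 : j'*q ≤ (j-1)*q := Nat.mul_le_mul_right q hj'.2
        omega
      rw [Finset.sum_congr rfl hc, Finset.sum_const, smul_eq_mul, Nat.card_Icc]
      simp
    have hjle : j ≤ r*(l-1)+1 := by
      have h1 : r*(l-1) = (l-1)*r := Nat.mul_comm r (l-1)
      have h2 : r ≤ (l-1)*r := Nat.le_mul_of_pos_left r (by omega)
      omega
    have hid : s * (r*k) = (j-1)*(k*n) + k*(r*(l-1)+1-j) := by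
      rw [hsdef]
      subst hn
      zify [hjle, hj1, show 1 ≤ l by omega,
        show 1 ≤ (j-1)*q + l from le_trans (by omega) (Nat.le_add_left l _)]
      ring
    omega
  have hlow : ∀ l, 2 ≤ l → l ≤ q+1 → ∀ i, k*(r*(l-1)+1-j)+1 ≤ i → i ≤ k*n →
      (j-1)*q + l ≤ T i j := by
    intro l hl2 hlq i hi1 hiM
    have h := hcard_lb ((j-1)*q + l - 1) _ i (hclow l hl2 hlq) hi1 hiM
    omega
  -- upper bound, part (i)
  have hupA : ∀ l, 2 ≤ l → l ≤ m j → ∀ i, 1 ≤ i → i ≤ k*(r*l+1-j) → T i j ≤ (j-1)*q + l := by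
    intro l hl2 hlm i hi1 hi2
    have hmj := hm j hj1 hjr
    set t := (j-1)*q + l with htdef
    have hlq : l ≤ q := le_trans hlm hmj.2
    have hsub1 : (j-1)*q = j*q - q := Nat.sub_one_mul j q
    have hsub2 : j*q ≤ r*q := Nat.mul_le_mul_right q hjr'
    have hsub3 : r*q = q*r := Nat.mul_comm r q
    have hsub4 : q ≤ j*q := Nat.le_mul_of_pos_left q hj1
    have htn : t ≤ n := by omega
    have hkey := key t htn
    rw [hsplit (fun j' => ((Finset.Icc 1 (k*n)).filter (fun i => T i j' ≤ t)).card)] at hkey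
    have hzero : ∑ j' ∈ Finset.Icc (j+1) r,
        ((Finset.Icc 1 (k*n)).filter (fun i => T i j' ≤ t)).card = 0 := by
      refine Finset.sum_eq_zero (fun j' hj' => ?_)
      rw [Finset.mem_Icc] at hj'
      refine hempty j' t (by omega) hj'.2 ?_
      rcases eq_or_lt_of_le hj'.1 with heq | hlt
      · have e1 : j'-2 = j-1 := by omega
        have e2 : j'-1 = j := by omega
        rw [e1, e2]
        omega
      · have hmj' := hm (j'-1) (by omega) (by omega)
        have h1 : j*q ≤ (j'-2)*q := Nat.mul_le_mul_right q (by omega)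
        omega
    have hleft : ∑ j' ∈ Finset.Icc 1 (j-1),
        ((Finset.Icc 1 (k*n)).filter (fun i => T i j' ≤ t)).card ≤ (j-1)*(k*n) := by
      calc ∑ j' ∈ Finset.Icc 1 (j-1), ((Finset.Icc 1 (k*n)).filter (fun i => T i j' ≤ t)).card
          ≤ ∑ _j' ∈ Finset.Icc 1 (j-1), (k*n) := Finset.sum_le_sum (fun j' _ =>
            le_trans (Finset.card_filter_le _ _) (by rw [Nat.card_Icc]; omega))
        _ = (j-1)*(k*n) := by rw [Finset.sum_const, smul_eq_mul, Nat.card_Icc]; simp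
    have hjle : j ≤ r*l+1 := by
      have h2 : r ≤ r*l := Nat.le_mul_of_pos_right r (by omega)
      omega
    have hid : t*(r*k) = (j-1)*(k*n) + k*(r*l+1-j) := by
      rw [htdef]
      subst hn
      zify [hjle, hj1]
      ring
    have hcj : k*(r*l+1-j) ≤ ((Finset.Icc 1 (k*n)).filter (fun i => T i j ≤ t)).card := by omega
    exact hcard_ub t _ i hcj hi1 hi2
  -- upper bound, part (ii)
  have hupB : ∀ l, 2 ≤ l → l ≤ q+1 → ∀ i, 1 ≤ i → i ≤ k*(r*(l-1)+1) → T i j ≤ (j-1)*q + l := by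
    intro l hl2 hlq i hi1 hi2
    set t := (j-1)*q + l with htdef
    have hsub1 : (j-1)*q = j*q - q := Nat.sub_one_mul j q
    have hsub2 : j*q ≤ r*q := Nat.mul_le_mul_right q hjr'
    have hsub3 : r*q = q*r := Nat.mul_comm r q
    have hsub4 : q ≤ j*q := Nat.le_mul_of_pos_left q hj1
    have hbn : j*q + 1 ≤ n := by omega
    have hcomp : ((Finset.Icc 1 (k*n)).filter (fun i => ¬ T i j ≤ t)).card ≤ (q+1-l)*(r*k) := by
      have hsub : ((Finset.Icc 1 (k*n)).filter (fun i => ¬ T i j ≤ t)) ⊆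
          ((Finset.Icc 1 (k*n)).filter (fun i => t < T i j ∧ T i j ≤ j*q+1)) := by
        intro i' hi'
        rw [Finset.mem_filter, Finset.mem_Icc] at hi' ⊢
        exact ⟨hi'.1, by omega,
          le_trans (hmono j i' (k*n) hj1 hjr' hi'.1.1 hi'.1.2 le_rfl) (hlast j hj1 hjr')⟩
      refine le_trans (Finset.card_le_card hsub) (le_trans (hrange t (j*q+1) hbn) ?_)
      exact Nat.mul_le_mul_right _ (by omega)
    have htot := Finset.card_filter_add_card_filter_not
      (s := Finset.Icc 1 (k*n)) (p := fun i => T i j ≤ t)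
    have hic : (Finset.Icc 1 (k*n)).card = k*n := by rw [Nat.card_Icc]; omega
    have hid : k*(r*(l-1)+1) + (q+1-l)*(r*k) = k*n := by
      subst hn
      zify [hlq, show 1 ≤ l by omega]
      ring
    have hcj : k*(r*(l-1)+1) ≤ ((Finset.Icc 1 (k*n)).filter (fun i => T i j ≤ t)).card := by
      omega
    exact hcard_ub t _ i hcj hi1 hi2
  -- assemble
  refine ⟨fun l hl2 hlm i hi1 hi2 => ?_, fun l hl1 hlq i hi1 hi2 => ?_⟩
  · have hmj := hm j hj1 hjr
    have hiM : i ≤ k*n := by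
      refine le_trans hi2 (Nat.mul_le_mul_left k ?_)
      have h1 : r*l ≤ r*q := Nat.mul_le_mul_left r (le_trans hlm hmj.2)
      have h2 : r*q = q*r := Nat.mul_comm r q
      omega
    exact le_antisymm (hupA l hl2 hlm i (by omega) hi2) (hlow l hl2 (by omega) i hi1 hiM)
  · have hmj := hm j hj1 hjr
    have hl2 : 2 ≤ l := by omega
    have hiM : i ≤ k*n := by
      refine le_trans hi2 (Nat.mul_le_mul_left k ?_)
      have h1 : r*(l-1) ≤ r*q := Nat.mul_le_mul_left r (by omega)
      have h2 : r*q = q*r := Nat.mul_comm r q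
      omega
    exact le_antisymm (hupB l hl2 hlq i (by omega) hi2) (hlow l hl2 hlq i hi1 hiM)
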